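/- Let J be a fixed real d×M matrix whose columns have Euclidean norm at most G (G ≥ 0), let w ∈ Δ_M be fixed, and let Y_1, Y_2 : Ω → ℝ^{d×M} be independent random matrices with E[Y_j] = J, E‖Y_j − J‖_F² ≤ M·c for j ∈ {1,2}, and E‖(Y_2 − J)w‖² ≤ c, for some c ≥ 0. Then E‖Y_1ᵀ Y_2 w‖² ≤ M·(c + G²)². -/

import Mathlib

open MeasureTheory
open scoped BigOperators Matrix

/-- Euclidean norm of a vector in `ℝ^n`. -/
noncomputable def eNorm {n : ℕ} (v : Fin n → ℝ) : ℝ :=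
  Real.sqrt (∑ i, v i ^ 2)

/-- Frobenius norm of a real `d × M` matrix. -/
noncomputable def frobNorm {d M : ℕ} (A : Matrix (Fin d) (Fin M) ℝ) : ℝ :=
  Real.sqrt (∑ i, ∑ j, (A i j) ^ 2)

/-- The (entrywise) measurable space structure on matrices. -/
instance matrixMeasurableSpace {m n α : Type*} [MeasurableSpace α] :
    MeasurableSpace (Matrix m n α) :=
  inferInstanceAs (MeasurableSpace (m → n → α))

lemma eNorm_sq {n : ℕ} (v : Fin n → ℝ) : eNorm v ^ 2 = ∑ i, v i ^ 2 := by
  rw [eNorm, Real.sq_sqrt]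
  exact Finset.sum_nonneg fun i _ => sq_nonneg _

lemma frobNorm_sq {d M : ℕ} (A : Matrix (Fin d) (Fin M) ℝ) :
    frobNorm A ^ 2 = ∑ i, ∑ j, (A i j) ^ 2 := by
  rw [frobNorm, Real.sq_sqrt]
  exact Finset.sum_nonneg fun i _ => Finset.sum_nonneg fun j _ => sq_nonneg _

lemma matrix_entry_measurable {m n α : Type*} [MeasurableSpace α] (i : m) (j : n) :
    Measurable fun A : Matrix m n α => A i j :=
  (measurable_pi_apply j).comp (measurable_pi_apply i)

/-- Let `J` be a fixed real `d × M` matrix whose columns have Euclidean norm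
at most `G` (`G ≥ 0`), `w ∈ Δ_M` fixed, and `Y₁, Y₂` independent random matrices with
`E[Yⱼ] = J` (entrywise), `E‖Yⱼ − J‖_F² ≤ M·c` for `j ∈ {1,2}`, and `E‖(Y₂ − J)w‖² ≤ c`,
for some `c ≥ 0`. Then `E‖Y₁ᵀ Y₂ w‖² ≤ M·(c + G²)²`. -/
theorem stmt11 {Ω : Type*} [MeasurableSpace Ω] (μ : Measure Ω) [IsProbabilityMeasure μ]
    {d M : ℕ} {G c : ℝ} (hG : 0 ≤ G) (hc : 0 ≤ c)
    (J : Matrix (Fin d) (Fin M) ℝ)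
    (hJ : ∀ k : Fin M, eNorm (fun i => J i k) ≤ G)
    (w : Fin M → ℝ) (hw : w ∈ stdSimplex ℝ (Fin M))
    (Y₁ Y₂ : Ω → Matrix (Fin d) (Fin M) ℝ)
    (hY₁meas : Measurable Y₁) (hY₂meas : Measurable Y₂)
    (hindep : ProbabilityTheory.IndepFun Y₁ Y₂ μ)
    (hL2₁ : ∀ a b, MemLp (fun ω => Y₁ ω a b) 2 μ)
    (hL2₂ : ∀ a b, MemLp (fun ω => Y₂ ω a b) 2 μ)
    (hmean₁ : ∀ a b, ∫ ω, Y₁ ω a b ∂μ = J a b)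
    (hmean₂ : ∀ a b, ∫ ω, Y₂ ω a b ∂μ = J a b)
    (hfrob₁ : ∫ ω, frobNorm (Y₁ ω - J) ^ 2 ∂μ ≤ M * c)
    (hfrob₂ : ∫ ω, frobNorm (Y₂ ω - J) ^ 2 ∂μ ≤ M * c)
    (hvec₂ : ∫ ω, eNorm ((Y₂ ω - J).mulVec w) ^ 2 ∂μ ≤ c) :
    ∫ ω, eNorm (((Y₁ ω)ᵀ * Y₂ ω).mulVec w) ^ 2 ∂μ ≤ M * (c + G ^ 2) ^ 2 := by
  -- column norm bound, squared
  have hJsq : ∀ k : Fin M, (∑ i, (J i k) ^ 2) ≤ G ^ 2 := by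
    intro k
    have h := hJ k
    calc (∑ i, (J i k) ^ 2) = eNorm (fun i => J i k) ^ 2 := (eNorm_sq _).symm
      _ ≤ G ^ 2 := pow_le_pow_left₀ (Real.sqrt_nonneg _) h 2
  -- centered entries, memℒp facts
  have hD₁ : ∀ i j, MemLp (fun ω => Y₁ ω i j - J i j) 2 μ :=
    fun i j => (hL2₁ i j).sub (memLp_const _)
  have hD₂ : ∀ i j, MemLp (fun ω => Y₂ ω i j - J i j) 2 μ :=
    fun i j => (hL2₂ i j).sub (memLp_const _)
  have hD₁sq : ∀ i j, Integrable (fun ω => (Y₁ ω i j - J i j) ^ 2) μ :=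
    fun i j => (hD₁ i j).integrable_sq
  have hD₂sq : ∀ i j, Integrable (fun ω => (Y₂ ω i j - J i j) ^ 2) μ :=
    fun i j => (hD₂ i j).integrable_sq
  -- the two scalar random variables
  set F₁ : Ω → ℝ := fun ω => ∑ i, ∑ j, (Y₁ ω i j) ^ 2 with hF₁
  set F₂ : Ω → ℝ := fun ω => ∑ i, (∑ k, Y₂ ω i k * w k) ^ 2 with hF₂def
  -- pointwise bound
  have hpoint : ∀ ω, eNorm (((Y₁ ω)ᵀ * Y₂ ω).mulVec w) ^ 2 ≤ F₁ ω * F₂ ω := by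
    intro ω
    rw [eNorm_sq, ← Matrix.mulVec_mulVec]
    have hcs : ∀ k : Fin M, (((Y₁ ω)ᵀ.mulVec ((Y₂ ω).mulVec w)) k) ^ 2
        ≤ (∑ i, (Y₁ ω i k) ^ 2) * (∑ i, ((Y₂ ω).mulVec w i) ^ 2) := by
      intro k
      have := Finset.sum_mul_sq_le_sq_mul_sq Finset.univ
        (fun i => Y₁ ω i k) (fun i => (Y₂ ω).mulVec w i)
      simpa [Matrix.mulVec, dotProduct, Matrix.transpose_apply] using this
    have e1 : (∑ k : Fin M, ∑ i, (Y₁ ω i k) ^ 2) = F₁ ω := by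
      rw [hF₁]; exact Finset.sum_comm
    have e2 : (∑ i, ((Y₂ ω).mulVec w i) ^ 2) = F₂ ω := by
      rw [hF₂def]
      exact Finset.sum_congr rfl fun i _ => by
        simp [Matrix.mulVec, dotProduct]
    calc (∑ k, (((Y₁ ω)ᵀ.mulVec ((Y₂ ω).mulVec w)) k) ^ 2)
        ≤ ∑ k : Fin M, (∑ i, (Y₁ ω i k) ^ 2) * (∑ i, ((Y₂ ω).mulVec w i) ^ 2) :=
          Finset.sum_le_sum fun k _ => hcs k
      _ = (∑ k : Fin M, ∑ i, (Y₁ ω i k) ^ 2) * (∑ i, ((Y₂ ω).mulVec w i) ^ 2) := by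
          rw [Finset.sum_mul]
      _ = F₁ ω * F₂ ω := by rw [e1, e2]
  -- integrability of F₁, F₂
  have hintF₁ : Integrable F₁ μ := by
    apply integrable_finset_sum
    intro i _
    apply integrable_finset_sum
    intro j _
    exact (hL2₁ i j).integrable_sq
  have hz : ∀ i : Fin d, MemLp (fun ω => ∑ k, Y₂ ω i k * w k) 2 μ := by
    intro i
    apply memLp_finset_sum
    intro k _
    simpa [mul_comm] using (hL2₂ i k).const_mul (w k)
  have hintF₂ : Integrable F₂ μ := by
    apply integrable_finset_sum
    intro i _
    exact (hz i).integrable_sq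
  -- independence of F₁ and F₂
  have hφ : Measurable fun A : Matrix (Fin d) (Fin M) ℝ => ∑ i, ∑ j, (A i j) ^ 2 := by
    apply Finset.measurable_sum
    intro i _
    apply Finset.measurable_sum
    intro j _
    exact (matrix_entry_measurable i j).pow_const 2
  have hψ : Measurable fun A : Matrix (Fin d) (Fin M) ℝ => ∑ i, (∑ k, A i k * w k) ^ 2 := by
    apply Finset.measurable_sum
    intro i _
    apply Measurable.pow_const _ 2
    apply Finset.measurable_sum
    intro k _
    exact (matrix_entry_measurable i k).mul_const (w k)
  have hindepF : ProbabilityTheory.IndepFun F₁ F₂ μ := hindep.comp hφ hψ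
  -- first moment computation: ∫ F₁ ≤ M * (c + G²)
  have hEF₁ : ∫ ω, F₁ ω ∂μ ≤ M * (c + G ^ 2) := by
    have hsplit : ∀ i j, (∫ ω, (Y₁ ω i j) ^ 2 ∂μ)
        = (∫ ω, (Y₁ ω i j - J i j) ^ 2 ∂μ) + (J i j) ^ 2 := by
      intro i j
      have h1 : Integrable (fun ω => (Y₁ ω i j - J i j) ^ 2) μ := hD₁sq i j
      have h2 : Integrable (fun ω => Y₁ ω i j) μ := (hL2₁ i j).integrable one_le_two
      have h4 : Integrable (fun ω => 2 * J i j * Y₁ ω i j) μ := h2.const_mul _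
      have h5 : Integrable (fun ω => 2 * J i j * Y₁ ω i j - J i j ^ 2) μ :=
        h4.sub (integrable_const _)
      have heq : ∀ ω, (Y₁ ω i j) ^ 2
          = (Y₁ ω i j - J i j) ^ 2 + (2 * J i j * Y₁ ω i j - J i j ^ 2) := by
        intro ω; ring
      calc (∫ ω, (Y₁ ω i j) ^ 2 ∂μ)
          = ∫ ω, ((Y₁ ω i j - J i j) ^ 2 + (2 * J i j * Y₁ ω i j - J i j ^ 2)) ∂μ := by
            simp_rw [heq]
        _ = (∫ ω, (Y₁ ω i j - J i j) ^ 2 ∂μ)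
            + (2 * J i j * (∫ ω, Y₁ ω i j ∂μ) - J i j ^ 2) := by
            rw [integral_add h1 h5, integral_sub h4 (integrable_const _),
              integral_const_mul _ _, integral_const]
            simp
        _ = (∫ ω, (Y₁ ω i j - J i j) ^ 2 ∂μ) + (J i j) ^ 2 := by
            rw [hmean₁ i j]; ring
    have hsum : (∫ ω, F₁ ω ∂μ)
        = (∑ i, ∑ j, ∫ ω, (Y₁ ω i j - J i j) ^ 2 ∂μ) + ∑ i, ∑ j, (J i j) ^ 2 := by
      rw [hF₁]
      rw [integral_finset_sum _ fun i _ =>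
        integrable_finset_sum _ fun j _ => (hL2₁ i j).integrable_sq]
      rw [← Finset.sum_add_distrib]
      refine Finset.sum_congr rfl fun i _ => ?_
      rw [integral_finset_sum _ fun j _ => (hL2₁ i j).integrable_sq, ← Finset.sum_add_distrib]
      exact Finset.sum_congr rfl fun j _ => hsplit i j
    have hfrob₁' : (∑ i, ∑ j, ∫ ω, (Y₁ ω i j - J i j) ^ 2 ∂μ) ≤ M * c := by
      have heq : (∑ i, ∑ j, ∫ ω, (Y₁ ω i j - J i j) ^ 2 ∂μ)
          = ∫ ω, frobNorm (Y₁ ω - J) ^ 2 ∂μ := by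
        simp_rw [frobNorm_sq, Matrix.sub_apply]
        rw [integral_finset_sum _ fun i _ => integrable_finset_sum _ fun j _ => hD₁sq i j]
        refine Finset.sum_congr rfl fun i _ => ?_
        rw [integral_finset_sum _ fun j _ => hD₁sq i j]
      rw [heq]; exact hfrob₁
    have hJF : (∑ i, ∑ j, (J i j) ^ 2) ≤ M * G ^ 2 := by
      rw [Finset.sum_comm]
      calc (∑ j : Fin M, ∑ i, (J i j) ^ 2) ≤ ∑ _j : Fin M, G ^ 2 :=
            Finset.sum_le_sum fun j _ => hJsq j
        _ = M * G ^ 2 := by simp [mul_comm]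
    rw [hsum]
    calc _ ≤ (M : ℝ) * c + M * G ^ 2 := add_le_add hfrob₁' hJF
      _ = M * (c + G ^ 2) := by ring
  -- second moment computation: ∫ F₂ ≤ c + G²
  have hEF₂ : ∫ ω, F₂ ω ∂μ ≤ c + G ^ 2 := by
    set u : Fin d → ℝ := fun i => ∑ k, J i k * w k with hu
    set V : Fin d → Ω → ℝ := fun i ω => ∑ k, (Y₂ ω i k - J i k) * w k with hV
    have hVL2 : ∀ i, MemLp (V i) 2 μ := by
      intro i
      apply memLp_finset_sum
      intro k _
      simpa [mul_comm] using ((hL2₂ i k).sub (memLp_const (J i k))).const_mul (w k)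
    have hVsq : ∀ i, Integrable (fun ω => V i ω ^ 2) μ := fun i => (hVL2 i).integrable_sq
    have hVint : ∀ i, Integrable (V i) μ := fun i => (hVL2 i).integrable one_le_two
    have hterm : ∀ i k, Integrable (fun ω => (Y₂ ω i k - J i k) * w k) μ :=
      fun i k => ((hD₂ i k).integrable one_le_two).mul_const _
    have hVmean : ∀ i, (∫ ω, V i ω ∂μ) = 0 := by
      intro i
      show (∫ ω, ∑ k, (Y₂ ω i k - J i k) * w k ∂μ) = 0
      rw [integral_finset_sum _ fun k _ => hterm i k]
      refine Finset.sum_eq_zero fun k _ => ?_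
      rw [integral_mul_const _ _, integral_sub ((hL2₂ i k).integrable one_le_two)
        (integrable_const _), hmean₂ i k, integral_const]
      simp
    have hzeq : ∀ i ω, (∑ k, Y₂ ω i k * w k) = V i ω + u i := by
      intro i ω
      show (∑ k, Y₂ ω i k * w k)
          = (∑ k, (Y₂ ω i k - J i k) * w k) + ∑ k, J i k * w k
      rw [← Finset.sum_add_distrib]
      exact Finset.sum_congr rfl fun k _ => by ring
    have hsplit : ∀ i, (∫ ω, (∑ k, Y₂ ω i k * w k) ^ 2 ∂μ)
        = (∫ ω, V i ω ^ 2 ∂μ) + (u i) ^ 2 := by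
      intro i
      have h4 : Integrable (fun ω => 2 * u i * V i ω) μ := (hVint i).const_mul _
      have h5 : Integrable (fun ω => 2 * u i * V i ω + u i ^ 2) μ :=
        h4.add (integrable_const _)
      calc (∫ ω, (∑ k, Y₂ ω i k * w k) ^ 2 ∂μ)
          = ∫ ω, (V i ω ^ 2 + (2 * u i * V i ω + u i ^ 2)) ∂μ := by
            refine integral_congr_ae (Filter.Eventually.of_forall fun ω => ?_)
            show (∑ k, Y₂ ω i k * w k) ^ 2 = V i ω ^ 2 + (2 * u i * V i ω + u i ^ 2)
            rw [hzeq i ω]; ring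
        _ = (∫ ω, V i ω ^ 2 ∂μ) + (2 * u i * (∫ ω, V i ω ∂μ) + u i ^ 2) := by
            rw [integral_add (hVsq i) h5, integral_add h4 (integrable_const _),
              integral_const_mul _ _, integral_const]
            simp
        _ = (∫ ω, V i ω ^ 2 ∂μ) + (u i) ^ 2 := by rw [hVmean i]; ring
    have hsum : (∫ ω, F₂ ω ∂μ) = (∑ i, ∫ ω, V i ω ^ 2 ∂μ) + ∑ i, (u i) ^ 2 := by
      rw [hF₂def, integral_finset_sum _ fun i _ => (hz i).integrable_sq,
        ← Finset.sum_add_distrib]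
      exact Finset.sum_congr rfl fun i _ => hsplit i
    have hVbound : (∑ i, ∫ ω, V i ω ^ 2 ∂μ) ≤ c := by
      have heq : ∀ ω, eNorm ((Y₂ ω - J).mulVec w) ^ 2 = ∑ i, V i ω ^ 2 := by
        intro ω
        rw [eNorm_sq]
        refine Finset.sum_congr rfl fun i _ => ?_
        have hVi : (Y₂ ω - J).mulVec w i = V i ω := by
          show (∑ k, (Y₂ ω - J) i k * w k) = ∑ k, (Y₂ ω i k - J i k) * w k
          exact Finset.sum_congr rfl fun k _ => by rw [Matrix.sub_apply]
        rw [hVi]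
      calc (∑ i, ∫ ω, V i ω ^ 2 ∂μ)
          = ∫ ω, ∑ i, V i ω ^ 2 ∂μ := (integral_finset_sum _ fun i _ => hVsq i).symm
        _ = ∫ ω, eNorm ((Y₂ ω - J).mulVec w) ^ 2 ∂μ :=
            integral_congr_ae (Filter.Eventually.of_forall fun ω => (heq ω).symm)
        _ ≤ c := hvec₂
    have hubound : (∑ i, (u i) ^ 2) ≤ G ^ 2 := by
      have hcs : ∀ i, (u i) ^ 2 ≤ ∑ k, w k * (J i k) ^ 2 := by
        intro i
        have hCS := Finset.sum_mul_sq_le_sq_mul_sq Finset.univ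
          (fun k => Real.sqrt (w k)) (fun k => Real.sqrt (w k) * J i k)
        have heq1 : (∑ k, Real.sqrt (w k) * (Real.sqrt (w k) * J i k)) = u i := by
          rw [hu]
          refine Finset.sum_congr rfl fun k _ => ?_
          rw [← mul_assoc, Real.mul_self_sqrt (hw.1 k)]
          exact mul_comm _ _
        have heq2 : (∑ k, Real.sqrt (w k) ^ 2) = 1 := by
          have h' : ∀ k : Fin M, Real.sqrt (w k) ^ 2 = w k :=
            fun k => Real.sq_sqrt (hw.1 k)
          simp_rw [h']; exact hw.2
        have heq3 : ∀ k : Fin M, (Real.sqrt (w k) * J i k) ^ 2 = w k * (J i k) ^ 2 := by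
          intro k
          rw [mul_pow, Real.sq_sqrt (hw.1 k)]
        rw [heq1, heq2, one_mul] at hCS
        calc (u i) ^ 2 ≤ ∑ k, (Real.sqrt (w k) * J i k) ^ 2 := hCS
          _ = ∑ k, w k * (J i k) ^ 2 := Finset.sum_congr rfl fun k _ => heq3 k
      calc (∑ i, (u i) ^ 2) ≤ ∑ i, ∑ k, w k * (J i k) ^ 2 :=
            Finset.sum_le_sum fun i _ => hcs i
        _ = ∑ k, w k * ∑ i, (J i k) ^ 2 := by
            rw [Finset.sum_comm]
            exact Finset.sum_congr rfl fun k _ => by rw [Finset.mul_sum]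
        _ ≤ ∑ k, w k * G ^ 2 :=
            Finset.sum_le_sum fun k _ => mul_le_mul_of_nonneg_left (hJsq k) (hw.1 k)
        _ = G ^ 2 := by rw [← Finset.sum_mul, hw.2, one_mul]
    rw [hsum]
    exact add_le_add hVbound hubound
  -- assemble
  have hEF₂nonneg : 0 ≤ ∫ ω, F₂ ω ∂μ := by
    apply integral_nonneg
    intro ω
    exact Finset.sum_nonneg fun i _ => sq_nonneg _
  have key : (∫ ω, eNorm (((Y₁ ω)ᵀ * Y₂ ω).mulVec w) ^ 2 ∂μ)
      ≤ ∫ ω, F₁ ω * F₂ ω ∂μ := by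
    apply integral_mono_of_nonneg
    · exact Filter.Eventually.of_forall fun ω => sq_nonneg _
    · exact hindepF.integrable_mul hintF₁ hintF₂
    · exact Filter.Eventually.of_forall hpoint
  have hmul : (∫ ω, F₁ ω * F₂ ω ∂μ) = (∫ ω, F₁ ω ∂μ) * ∫ ω, F₂ ω ∂μ :=
    hindepF.integral_mul_eq_mul_integral hintF₁.aestronglyMeasurable hintF₂.aestronglyMeasurable
  calc (∫ ω, eNorm (((Y₁ ω)ᵀ * Y₂ ω).mulVec w) ^ 2 ∂μ)
      ≤ (∫ ω, F₁ ω ∂μ) * ∫ ω, F₂ ω ∂μ := by rw [← hmul]; exact key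
    _ ≤ (M * (c + G ^ 2)) * (c + G ^ 2) := by
        apply mul_le_mul hEF₁ hEF₂ hEF₂nonneg
        positivity
    _ = M * (c + G ^ 2) ^ 2 := by ring
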